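/- Let H ∈ (0,1), let K : (0,∞) → ℝ be locally integrable, and suppose there exists d_Z ≠ 0 such that K(t) · t^{1/2−H} → d_Z as t → 0⁺. Then D(τ) = ∫₀^τ (τ−u) K(u) du satisfies D(τ) · τ^{−H−3/2} → d_Z Γ(H+1/2) / Γ(H+5/2) as τ → 0⁺; equivalently D(τ) = d_Z ( Γ(H+1/2)/Γ(H+5/2) ) τ^{H+3/2} (1+o(1)) as τ → 0⁺. -/

import Mathlib

open MeasureTheory Real Set Filter Topology

lemma aux_rpow_intble (a τ : ℝ) (ha : -1 < a) (hτ : 0 < τ) :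
    IntegrableOn (fun u : ℝ => u ^ a) (Set.Ioc 0 τ) := by
  have := intervalIntegral.intervalIntegrable_rpow' (a := 0) (b := τ) ha
  rwa [intervalIntegrable_iff_integrableOn_Ioc_of_le hτ.le] at this

lemma aux_intble (a τ : ℝ) (ha : -1 < a) (hτ : 0 < τ) :
    IntegrableOn (fun u : ℝ => (τ - u) * u ^ a) (Set.Ioc 0 τ) := by
  have hb : IntegrableOn (fun u : ℝ => τ * u ^ a) (Set.Ioc 0 τ) :=
    (aux_rpow_intble a τ ha hτ).const_mul τ
  refine Integrable.mono' hb ?_ ?_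
  · exact (measurable_const.sub measurable_id).aestronglyMeasurable.mul
      (aux_rpow_intble a τ ha hτ).aestronglyMeasurable
  · rw [ae_restrict_iff' measurableSet_Ioc]
    filter_upwards with u hu
    have h1 : (0:ℝ) < u := hu.1
    have h2 : u ≤ τ := hu.2
    have hp : (0:ℝ) ≤ u ^ a := Real.rpow_nonneg h1.le a
    rw [Real.norm_eq_abs, abs_mul, abs_of_nonneg (by linarith : (0:ℝ) ≤ τ - u),
      abs_of_nonneg hp]
    exact mul_le_mul_of_nonneg_right (by linarith) hp

lemma aux_integral (a τ : ℝ) (ha : -1 < a) (hτ : 0 < τ) :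
    ∫ u in Set.Ioc (0:ℝ) τ, (τ - u) * u ^ a = τ ^ (a + 2) / ((a + 1) * (a + 2)) := by
  have ha1 : (0:ℝ) < a + 1 := by linarith
  have ha2 : (0:ℝ) < a + 2 := by linarith
  rw [← intervalIntegral.integral_of_le hτ.le]
  have hcong : Set.EqOn (fun u : ℝ => (τ - u) * u ^ a)
      (fun u : ℝ => τ * u ^ a - u ^ (a + 1)) (Set.uIcc 0 τ) := by
    intro u hu
    rw [Set.uIcc_of_le hτ.le] at hu
    rcases eq_or_lt_of_le hu.1 with h | h
    · simp only [← h, Real.zero_rpow ha1.ne', sub_zero]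
    · simp only [Real.rpow_add_one (ne_of_gt h)]
      ring
  rw [intervalIntegral.integral_congr hcong]
  have i1 : IntervalIntegrable (fun u : ℝ => u ^ a) volume 0 τ :=
    intervalIntegral.intervalIntegrable_rpow' ha
  have i2 : IntervalIntegrable (fun u : ℝ => u ^ (a + 1)) volume 0 τ :=
    intervalIntegral.intervalIntegrable_rpow' (by linarith)
  rw [intervalIntegral.integral_sub (i1.const_mul τ) i2,
    intervalIntegral.integral_const_mul, integral_rpow (Or.inl ha),
    integral_rpow (Or.inl (by linarith : (-1:ℝ) < a + 1))]
  rw [Real.zero_rpow ha1.ne', Real.zero_rpow (by linarith : a + 1 + 1 ≠ 0)]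
  have e2 : τ * τ ^ (a + 1) = τ ^ (a + 2) := by
    have h := Real.rpow_add hτ 1 (a + 1)
    rw [Real.rpow_one] at h
    rw [show a + 2 = 1 + (a + 1) by ring, h]
  have e3 : τ ^ (a + 1 + 1) = τ ^ (a + 2) := by rw [show a + 1 + 1 = a + 2 by ring]
  rw [e3, sub_zero, sub_zero, mul_div_assoc' τ, e2]
  field_simp
  ring

theorem general_kernel_D_short_time (H : ℝ) (hH : H ∈ Set.Ioo (0:ℝ) 1)
    (K : ℝ → ℝ) (hK1 : ∀ T : ℝ, 0 < T → IntegrableOn K (Set.Ioc 0 T))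
    (dZ : ℝ) (hdZ : dZ ≠ 0)
    (hKzero : Tendsto (fun t : ℝ => K t * t ^ (1/2 - H)) (𝓝[>] 0) (𝓝 dZ)) :
    Tendsto (fun τ : ℝ => (∫ u in (0:ℝ)..τ, (τ - u) * K u) * τ ^ (-H - 3/2))
      (𝓝[>] 0)
      (𝓝 (dZ * Real.Gamma (H + 1/2) / Real.Gamma (H + 5/2))) := by
  obtain ⟨hH0, hH1⟩ := hH
  have ha : (-1:ℝ) < H - 1/2 := by linarith
  have ha1 : (0:ℝ) < H + 1/2 := by linarith
  have ha2 : (0:ℝ) < H + 3/2 := by linarith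
  have hGamma : dZ * Real.Gamma (H + 1/2) / Real.Gamma (H + 5/2)
      = dZ / ((H + 1/2) * (H + 3/2)) := by
    have hg0 : 0 < Real.Gamma (H + 1/2) := Real.Gamma_pos_of_pos ha1
    have e1 : Real.Gamma (H + 5/2) = (H + 3/2) * Real.Gamma (H + 3/2) := by
      rw [show H + 5/2 = H + 3/2 + 1 by ring, Real.Gamma_add_one ha2.ne']
    have e2 : Real.Gamma (H + 3/2) = (H + 1/2) * Real.Gamma (H + 1/2) := by
      rw [show H + 3/2 = H + 1/2 + 1 by ring, Real.Gamma_add_one ha1.ne']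
    rw [e1, e2]
    field_simp
  rw [hGamma]
  rw [Metric.tendsto_nhdsWithin_nhds] at hKzero ⊢
  intro ε hε
  set ε' : ℝ := ε * ((H + 1/2) * (H + 3/2)) / 2 with hε'_def
  have hε'pos : 0 < ε' := by positivity
  obtain ⟨δ, hδ, hδ'⟩ := hKzero ε' hε'pos
  refine ⟨δ, hδ, ?_⟩
  intro τ hτ hτδ
  have hτ0 : (0:ℝ) < τ := hτ
  have hK : IntegrableOn K (Set.Ioc 0 τ) := hK1 τ hτ0
  -- integrability of the integrand
  have hint1 : IntegrableOn (fun u : ℝ => (τ - u) * K u) (Set.Ioc 0 τ) := by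
    refine Integrable.mono' ((hK.norm).const_mul τ) ?_ ?_
    · exact ((measurable_const.sub measurable_id).aestronglyMeasurable.mul
        hK.aestronglyMeasurable)
    · rw [ae_restrict_iff' measurableSet_Ioc]
      filter_upwards with u hu
      have h1 : (0:ℝ) < u := hu.1
      have h2 : u ≤ τ := hu.2
      rw [norm_mul, Real.norm_eq_abs (τ - u), abs_of_nonneg (by linarith : (0:ℝ) ≤ τ - u)]
      exact mul_le_mul_of_nonneg_right (by linarith) (norm_nonneg _)
  have hint2 : IntegrableOn (fun u : ℝ => (τ - u) * u ^ (H - 1/2)) (Set.Ioc 0 τ) :=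
    aux_intble _ _ ha hτ0
  set I : ℝ := ∫ u in Set.Ioc (0:ℝ) τ, (τ - u) * u ^ (H - 1/2) with hI_def
  have hIval : I = τ ^ (H + 3/2) / ((H + 1/2) * (H + 3/2)) := by
    rw [hI_def, aux_integral _ _ ha hτ0,
      show H - 1/2 + 2 = H + 3/2 by ring, show H - 1/2 + 1 = H + 1/2 by ring]
  set D : ℝ := ∫ u in Set.Ioc (0:ℝ) τ, (τ - u) * K u with hD_def
  have hDeq : (∫ u in (0:ℝ)..τ, (τ - u) * K u) = D :=
    intervalIntegral.integral_of_le hτ0.le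
  -- main bound
  have hbound : |D - dZ * I| ≤ ε' * (τ ^ (H + 3/2) / ((H + 1/2) * (H + 3/2))) := by
    have hsub : D - dZ * I
        = ∫ u in Set.Ioc (0:ℝ) τ, ((τ - u) * K u - dZ * ((τ - u) * u ^ (H - 1/2))) := by
      rw [hD_def, hI_def, ← integral_const_mul, ← integral_sub hint1 (hint2.const_mul dZ)]
    rw [hsub, ← Real.norm_eq_abs]
    have hle : ‖∫ u in Set.Ioc (0:ℝ) τ,
        ((τ - u) * K u - dZ * ((τ - u) * u ^ (H - 1/2)))‖
        ≤ ∫ u in Set.Ioc (0:ℝ) τ, ε' * ((τ - u) * u ^ (H - 1/2)) := by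
      refine norm_integral_le_of_norm_le ((aux_intble _ _ ha hτ0).const_mul ε') ?_
      rw [ae_restrict_iff' measurableSet_Ioc]
      filter_upwards with u hu
      have h1 : (0:ℝ) < u := hu.1
      have h2 : u ≤ τ := hu.2
      have hmul : u ^ (H - 1/2) * u ^ (1/2 - H) = 1 := by
        rw [← Real.rpow_add h1, show H - 1/2 + (1/2 - H) = 0 by ring, Real.rpow_zero]
      have key : (τ - u) * K u - dZ * ((τ - u) * u ^ (H - 1/2))
          = ((τ - u) * u ^ (H - 1/2)) * (K u * u ^ (1/2 - H) - dZ) := by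
        have h3 : ((τ - u) * u ^ (H - 1/2)) * (K u * u ^ (1/2 - H)) = (τ - u) * K u := by
          calc ((τ - u) * u ^ (H - 1/2)) * (K u * u ^ (1/2 - H))
              = (τ - u) * K u * (u ^ (H - 1/2) * u ^ (1/2 - H)) := by ring
            _ = (τ - u) * K u := by rw [hmul, mul_one]
        rw [mul_sub, h3]; ring
      rw [key, norm_mul]
      have hpos : (0:ℝ) ≤ (τ - u) * u ^ (H - 1/2) :=
        mul_nonneg (by linarith) (Real.rpow_nonneg h1.le _)
      rw [Real.norm_of_nonneg hpos]
      have hdistu : dist u 0 < δ := by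
        rw [Real.dist_eq, sub_zero, abs_of_pos h1]
        calc u ≤ τ := h2
          _ < δ := by rwa [Real.dist_eq, sub_zero, abs_of_pos hτ0] at hτδ
      have hlt : ‖K u * u ^ (1/2 - H) - dZ‖ < ε' := by
        have := hδ' (Set.mem_Ioi.mpr h1) hdistu
        rwa [Real.dist_eq] at this
      calc ((τ - u) * u ^ (H - 1/2)) * ‖K u * u ^ (1/2 - H) - dZ‖
          ≤ ((τ - u) * u ^ (H - 1/2)) * ε' := mul_le_mul_of_nonneg_left hlt.le hpos
        _ = ε' * ((τ - u) * u ^ (H - 1/2)) := mul_comm _ _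
    calc ‖∫ u in Set.Ioc (0:ℝ) τ, ((τ - u) * K u - dZ * ((τ - u) * u ^ (H - 1/2)))‖
        ≤ ∫ u in Set.Ioc (0:ℝ) τ, ε' * ((τ - u) * u ^ (H - 1/2)) := hle
      _ = ε' * I := by rw [integral_const_mul, hI_def]
      _ = ε' * (τ ^ (H + 3/2) / ((H + 1/2) * (H + 3/2))) := by rw [hIval]
  -- conclude
  have hpow : (0:ℝ) < τ ^ (-H - 3/2) := Real.rpow_pos_of_pos hτ0 _
  have hcancel : τ ^ (H + 3/2) * τ ^ (-H - 3/2) = 1 := by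
    rw [← Real.rpow_add hτ0, show H + 3/2 + (-H - 3/2) = 0 by ring, Real.rpow_zero]
  have hL : dZ / ((H + 1/2) * (H + 3/2)) = dZ * I * τ ^ (-H - 3/2) := by
    rw [hIval]
    calc dZ / ((H + 1/2) * (H + 3/2))
        = dZ / ((H + 1/2) * (H + 3/2)) * (τ ^ (H + 3/2) * τ ^ (-H - 3/2)) := by
          rw [hcancel, mul_one]
      _ = dZ * (τ ^ (H + 3/2) / ((H + 1/2) * (H + 3/2))) * τ ^ (-H - 3/2) := by ring
  rw [Real.dist_eq, hDeq, hL]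
  calc |D * τ ^ (-H - 3/2) - dZ * I * τ ^ (-H - 3/2)|
      = |D - dZ * I| * τ ^ (-H - 3/2) := by
        rw [← sub_mul, abs_mul, abs_of_pos hpow]
    _ ≤ ε' * (τ ^ (H + 3/2) / ((H + 1/2) * (H + 3/2))) * τ ^ (-H - 3/2) :=
        mul_le_mul_of_nonneg_right hbound hpow.le
    _ = ε' / ((H + 1/2) * (H + 3/2)) * (τ ^ (H + 3/2) * τ ^ (-H - 3/2)) := by ring
    _ = ε' / ((H + 1/2) * (H + 3/2)) := by rw [hcancel, mul_one]
    _ = ε / 2 := by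
        rw [hε'_def]
        field_simp
    _ < ε := by linarith
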